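/- Every unit of ℋ has bounded coefficients: if f = ∑_{n≥0} a_n X^n and g = ∑_{n≥0} b_n X^n are elements of ℋ with f·g = 1, then sup_n ‖a_n‖ < ∞ and sup_n ‖b_n‖ < ∞. Consequently the group of units of ℋ coincides with the group of units of the subring Λ[1/p] of ℋ consisting of power series with bounded coefficient sequence (the subring 𝒪_E[[X]] ⊗ ℚ_p, where 𝒪_E is the ring of integers of E). -/

import Mathlib

/-!
Statement 2.  Every unit of `ℋ` (the ring of power series over `E` converging on the
open `p`-adic unit disc) has bounded coefficients, and consequently the group of units
of `ℋ` coincides with the group of units of its subring `Λ[1/p] = 𝒪_E[[X]] ⊗ ℚ_p`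
consisting of the power series with bounded coefficient sequence.
-/

open Filter PowerSeries

/-- The set of power series over `E` converging on the open `p`-adic unit disc:
`f = ∑ aₙ Xⁿ` with `‖aₙ‖ · rⁿ → 0` for every `0 ≤ r < 1`.  (The underlying set of the
ring `ℋ`.) -/
def Hcal (E : Type) [NormedField E] : Set (PowerSeries E) :=
  {f | ∀ r : ℝ, 0 ≤ r → r < 1 →
    Tendsto (fun n : ℕ => ‖(PowerSeries.coeff n) f‖ * r ^ n) atTop (nhds 0)}

/-- The set of power series over `E` with bounded coefficient sequence; this is the
underlying set of the subring `Λ[1/p] = 𝒪_E[[X]] ⊗ ℚ_p` of `ℋ`. -/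
def LambdaInvP (E : Type) [NormedField E] : Set (PowerSeries E) :=
  {f | ∃ C : ℝ, ∀ n : ℕ, ‖(PowerSeries.coeff n) f‖ ≤ C}

/-- argmax with minimal index for a nonneg sequence tending to 0 with u 0 > 0 -/
lemma exists_argmax (u : ℕ → ℝ) (hu : Tendsto u atTop (nhds 0)) (h0 : 0 < u 0) :
    ∃ m : ℕ, (∀ n, u n ≤ u m) ∧ (∀ i, i < m → u i < u m) := by
  classical
  obtain ⟨N, hN⟩ := (hu.eventually (gt_mem_nhds h0)).exists_forall_of_atTop
  have hne : (Finset.range (N + 1)).Nonempty := ⟨0, by simp⟩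
  set M : ℝ := (Finset.range (N + 1)).sup' hne u with hM
  have hmax : ∀ n, u n ≤ M := by
    intro n
    rcases le_or_gt n N with h | h
    · exact Finset.le_sup' u (by simp [Nat.lt_succ_iff, h])
    · exact le_of_lt (lt_of_lt_of_le (hN n h.le) (Finset.le_sup' u (by simp)))
  obtain ⟨j, hj, hjM⟩ := Finset.exists_mem_eq_sup' hne u
  have hex : ∃ m, u m = M := ⟨j, hjM.symm⟩
  refine ⟨Nat.find hex, ?_, ?_⟩
  · intro n; rw [Nat.find_spec hex]; exact hmax n
  · intro i hi
    rw [Nat.find_spec hex]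
    exact lt_of_le_of_ne (hmax i) (Nat.find_min hex hi)

lemma key_bound {E : Type} [NormedField E] [IsUltrametricDist E]
    (f g : PowerSeries E) (hf : f ∈ Hcal E) (hg : g ∈ Hcal E) (hfg : f * g = 1)
    {r : ℝ} (hr0 : 0 < r) (hr1 : r < 1) (k : ℕ) :
    ‖coeff k f‖ * r ^ k ≤ ‖coeff 0 f‖ := by
  classical
  set u : ℕ → ℝ := fun n => ‖coeff n f‖ * r ^ n with hu_def
  set v : ℕ → ℝ := fun n => ‖coeff n g‖ * r ^ n with hv_def
  have hconst : constantCoeff f * constantCoeff g = 1 := by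
    rw [← map_mul, hfg, map_one]
  have ha0 : (0 : ℝ) < ‖coeff 0 f‖ := by
    rw [coeff_zero_eq_constantCoeff]
    refine norm_pos_iff.mpr fun h => ?_
    rw [h, zero_mul] at hconst
    exact one_ne_zero hconst.symm
  have hb0 : (0 : ℝ) < ‖coeff 0 g‖ := by
    rw [coeff_zero_eq_constantCoeff]
    refine norm_pos_iff.mpr fun h => ?_
    rw [h, mul_zero] at hconst
    exact one_ne_zero hconst.symm
  have hu0 : 0 < u 0 := by simpa [hu_def] using ha0
  have hv0 : 0 < v 0 := by simpa [hv_def] using hb0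
  obtain ⟨m, hm_max, hm_min⟩ := exists_argmax u (hf r hr0.le hr1) hu0
  obtain ⟨n, hn_max, hn_min⟩ := exists_argmax v (hg r hr0.le hr1) hv0
  have hum : 0 < u m := lt_of_lt_of_le hu0 (hm_max 0)
  have hvn : 0 < v n := lt_of_lt_of_le hv0 (hn_max 0)
  -- claim m = 0
  have hm0 : m = 0 := by
    by_contra hm0
    have hmn : m + n ≠ 0 := by omega
    have hcoef : (coeff (m + n)) (f * g) = 0 := by
      rw [hfg, coeff_one, if_neg hmn]
    rw [coeff_mul] at hcoef
    set T := Finset.HasAntidiagonal.antidiagonal (m + n) with hT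
    have hmem : ((m, n) : ℕ × ℕ) ∈ T := by simp [hT]
    have hsplit : coeff m f * coeff n g
        + ∑ x ∈ T.erase (m, n), coeff x.1 f * coeff x.2 g = 0 := by
      simpa using (Finset.add_sum_erase T
        (fun x : ℕ × ℕ => coeff x.1 f * coeff x.2 g) hmem).trans hcoef
    have hne : (T.erase (m, n)).Nonempty := by
      rcases Nat.eq_zero_or_pos m with h | h
      · exact absurd h hm0
      · exact ⟨(0, m + n), by simp [hT, Finset.mem_erase, Prod.ext_iff]; omega⟩
    obtain ⟨i, hiT, hile⟩ := IsUltrametricDist.exists_norm_finset_sum_le_of_nonempty hne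
      (fun x : ℕ × ℕ => coeff x.1 f * coeff x.2 g)
    have heq : ‖coeff m f * coeff n g‖
        ≤ ‖coeff i.1 f * coeff i.2 g‖ := by
      have : coeff m f * coeff n g
          = -∑ x ∈ T.erase (m, n), coeff x.1 f * coeff x.2 g := by
        linear_combination hsplit
      rw [this, norm_neg]; exact hile
    -- strict inequality the other way
    have hij : i.1 + i.2 = m + n := by
      have := Finset.mem_of_mem_erase hiT
      simpa [hT, Finset.mem_antidiagonal] using this
    have hij_ne : i ≠ (m, n) := Finset.ne_of_mem_erase hiT
    have hstrict : u i.1 * v i.2 < u m * v n := by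
      rcases lt_or_ge i.1 m with h | h
      · calc u i.1 * v i.2 ≤ u i.1 * v n := by
              refine mul_le_mul_of_nonneg_left (hn_max _) ?_
              exact mul_nonneg (norm_nonneg _) (pow_nonneg hr0.le _)
          _ < u m * v n := mul_lt_mul_of_pos_right (hm_min _ h) hvn
      · have h2 : i.2 < n := by
          rcases lt_or_eq_of_le h with h' | h'
          · omega
          · exfalso; apply hij_ne; have : i.2 = n := by omega
            exact Prod.ext h'.symm this
        calc u i.1 * v i.2 ≤ u m * v i.2 :=
              mul_le_mul_of_nonneg_right (hm_max _)
                (mul_nonneg (norm_nonneg _) (pow_nonneg hr0.le _))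
          _ < u m * v n := by
              exact mul_lt_mul_of_pos_left (hn_min _ h2) hum
    have hnorm_eq : ∀ a b : ℕ, a + b = m + n →
        ‖coeff a f * coeff b g‖ * r ^ (m + n) = u a * v b := by
      intro a b hab
      rw [norm_mul, hu_def, hv_def]
      simp only
      rw [← hab, pow_add]; ring
    have h1 : u m * v n ≤ u i.1 * v i.2 := by
      rw [← hnorm_eq m n rfl, ← hnorm_eq i.1 i.2 hij]
      exact mul_le_mul_of_nonneg_right heq (pow_nonneg hr0.le _)
    exact absurd h1 (not_le_of_gt hstrict)
  have := hm_max k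
  rw [hm0] at this
  simpa [hu_def] using this

lemma bounded_of_unit {E : Type} [NormedField E] [IsUltrametricDist E]
    (f g : PowerSeries E) (hf : f ∈ Hcal E) (hg : g ∈ Hcal E) (hfg : f * g = 1) (k : ℕ) :
    ‖coeff k f‖ ≤ ‖coeff 0 f‖ := by
  set r : ℕ → ℝ := fun j => 1 - ((j : ℝ) + 2)⁻¹ with hr_def
  have hr0 : ∀ j, 0 < r j := by
    intro j
    have h2 : ((j : ℝ) + 2)⁻¹ ≤ 2⁻¹ := by
      apply inv_anti₀ (by norm_num)
      have : (0 : ℝ) ≤ (j : ℝ) := Nat.cast_nonneg j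
      linarith
    simp only [hr_def]; norm_num; linarith
  have hr1 : ∀ j, r j < 1 := by
    intro j
    have : (0 : ℝ) < ((j : ℝ) + 2)⁻¹ := by positivity
    simp only [hr_def]; linarith
  have hrlim : Tendsto r atTop (nhds 1) := by
    have h2 : Tendsto (fun j : ℕ => ((j : ℝ) + 2)⁻¹) atTop (nhds 0) :=
      tendsto_inv_atTop_zero.comp
        (tendsto_atTop_add_const_right _ 2 tendsto_natCast_atTop_atTop)
    simpa using tendsto_const_nhds.sub h2
  have hlim : Tendsto (fun j => ‖coeff k f‖ * r j ^ k) atTop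
      (nhds (‖coeff k f‖ * 1 ^ k)) :=
    tendsto_const_nhds.mul (hrlim.pow k)
  rw [one_pow, mul_one] at hlim
  exact le_of_tendsto' hlim fun j =>
    key_bound f g hf hg hfg (hr0 j) (hr1 j) k

lemma mem_Hcal_of_bounded {E : Type} [NormedField E] (f : PowerSeries E)
    (C : ℝ) (hC : ∀ n, ‖coeff n f‖ ≤ C) : f ∈ Hcal E := by
  intro s hs0 hs1
  have hC0 : 0 ≤ C := le_trans (norm_nonneg _) (hC 0)
  have h1 : Tendsto (fun n : ℕ => C * s ^ n) atTop (nhds 0) := by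
    simpa using tendsto_const_nhds.mul (tendsto_pow_atTop_nhds_zero_of_lt_one hs0 hs1)
  refine squeeze_zero (fun n => mul_nonneg (norm_nonneg _) (pow_nonneg hs0 _)) ?_ h1
  intro n
  exact mul_le_mul_of_nonneg_right (hC n) (pow_nonneg hs0 _)

/-- Every unit of `ℋ` has bounded coefficients: if `f · g = 1` with `f, g ∈ ℋ`, then the
coefficient sequences of both `f` and `g` are bounded.  Consequently `ℋ^× = (Λ[1/p])^×`:
an element `f` is invertible in `ℋ` if and only if it lies in `Λ[1/p]` and is invertible
there. -/
theorem units_of_Hcal_are_bounded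
    (p : ℕ) [Fact (Nat.Prime p)]
    (E : Type) [NormedField E] [IsUltrametricDist E]
    [NormedAlgebra ℚ_[p] E] [FiniteDimensional ℚ_[p] E]
    (hnorm : ∀ x : ℚ_[p], ‖algebraMap ℚ_[p] E x‖ = ‖x‖) :
    (∀ f g : PowerSeries E, f ∈ Hcal E → g ∈ Hcal E → f * g = 1 →
      (∃ C : ℝ, ∀ n : ℕ, ‖(PowerSeries.coeff n) f‖ ≤ C) ∧
      (∃ C : ℝ, ∀ n : ℕ, ‖(PowerSeries.coeff n) g‖ ≤ C)) ∧
    (∀ f : PowerSeries E,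
      (f ∈ Hcal E ∧ ∃ g ∈ Hcal E, f * g = 1) ↔
      (f ∈ LambdaInvP E ∧ ∃ g ∈ LambdaInvP E, f * g = 1)) := by
  constructor
  · intro f g hf hg hfg
    exact ⟨⟨‖coeff 0 f‖, bounded_of_unit f g hf hg hfg⟩,
           ⟨‖coeff 0 g‖, bounded_of_unit g f hg hf (by rwa [mul_comm])⟩⟩
  · intro f
    constructor
    · rintro ⟨hf, g, hg, hfg⟩
      exact ⟨⟨_, bounded_of_unit f g hf hg hfg⟩, g,
        ⟨_, bounded_of_unit g f hg hf (by rwa [mul_comm])⟩, hfg⟩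
    · rintro ⟨⟨C, hC⟩, g, ⟨D, hD⟩, hfg⟩
      exact ⟨mem_Hcal_of_bounded f C hC, g, mem_Hcal_of_bounded g D hD, hfg⟩
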